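/- Let K ∈ ℝ and L > 0, and set c = 4(1 + K²)/L. Define, for t > c, f(t) = (2K/√L)·log(√t + √(t − c)) and g(t) = (2/√L)·log(√t + √(t − c)). Then f and g satisfy the system of ordinary differential equations t f″(t) + f′(t) + 2t f′(t)(f′(t)² + g′(t)²) = 0 and t g″(t) + g′(t) + 2t g′(t)(f′(t)² + g′(t)²) = 0 for all t > c. (This system is the condition for the rotationally symmetric graph (u, v, f(u² + v²), g(u² + v²)) to be a minimal surface in ℝ⁴.) -/

import Mathlib

noncomputable section

lemma hasDerivAt_phi {c s : ℝ} (hc : 0 < c) (hs : c < s) :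
    HasDerivAt (fun x => Real.log (Real.sqrt x + Real.sqrt (x - c)))
      ((2 * Real.sqrt s * Real.sqrt (s - c))⁻¹) s := by
  have hs0 : 0 < s := hc.trans hs
  have hsc : 0 < s - c := sub_pos.mpr hs
  have ha : 0 < Real.sqrt s := Real.sqrt_pos.mpr hs0
  have hb : 0 < Real.sqrt (s - c) := Real.sqrt_pos.mpr hsc
  have h1 : HasDerivAt Real.sqrt (1 / (2 * Real.sqrt s)) s := Real.hasDerivAt_sqrt hs0.ne'
  have h2 : HasDerivAt (fun x => Real.sqrt (x - c)) (1 / (2 * Real.sqrt (s - c))) s := by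
    have := (Real.hasDerivAt_sqrt hsc.ne').comp s ((hasDerivAt_id s).sub_const c)
    simpa [Function.comp_def] using this
  have hsum := h1.add h2
  have hpos : 0 < Real.sqrt s + Real.sqrt (s - c) := by positivity
  have hlog := (Real.hasDerivAt_log hpos.ne').comp s hsum
  convert hlog using 1
  case e'_4 => rfl
  case e'_5 => rfl
  case e'_8 => rfl
  field_simp
  ring

/-- `f(t) = (2K/√L)·log(√t + √(t − c))` with `c = 4(1 + K²)/L`. -/
def fRot (K L : ℝ) : ℝ → ℝ := fun t =>
  (2 * K / Real.sqrt L) * Real.log (Real.sqrt t + Real.sqrt (t - 4 * (1 + K ^ 2) / L))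

/-- `g(t) = (2/√L)·log(√t + √(t − c))` with `c = 4(1 + K²)/L`. -/
def gRot (K L : ℝ) : ℝ → ℝ := fun t =>
  (2 / Real.sqrt L) * Real.log (Real.sqrt t + Real.sqrt (t - 4 * (1 + K ^ 2) / L))

/-- the explicit functions `f`, `g` solve, for `t > c = 4(1+K²)/L`,
the ODE system `t h″ + h′ + 2t h′((f′)² + (g′)²) = 0` (for `h = f` and `h = g`),
which is the minimality condition for the rotationally symmetric graph
`(u, v, f(u² + v²), g(u² + v²))` in `ℝ⁴`. -/
theorem stmt15 (K L : ℝ) (hL : 0 < L) (t : ℝ) (ht : 4 * (1 + K ^ 2) / L < t) :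
    (t * deriv (deriv (fRot K L)) t + deriv (fRot K L) t
      + 2 * t * deriv (fRot K L) t
        * ((deriv (fRot K L) t) ^ 2 + (deriv (gRot K L) t) ^ 2) = 0) ∧
    (t * deriv (deriv (gRot K L)) t + deriv (gRot K L) t
      + 2 * t * deriv (gRot K L) t
        * ((deriv (fRot K L) t) ^ 2 + (deriv (gRot K L) t) ^ 2) = 0) := by
  set c : ℝ := 4 * (1 + K ^ 2) / L with hcdef
  have hc : 0 < c := by positivity
  have ht0 : 0 < t := hc.trans ht
  have htc : 0 < t - c := sub_pos.mpr ht
  have ha : 0 < Real.sqrt t := Real.sqrt_pos.mpr ht0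
  have hb : 0 < Real.sqrt (t - c) := Real.sqrt_pos.mpr htc
  have hl : 0 < Real.sqrt L := Real.sqrt_pos.mpr hL
  -- first derivatives
  have hF : ∀ s, c < s → HasDerivAt (fRot K L)
      ((2 * K / Real.sqrt L) * (2 * Real.sqrt s * Real.sqrt (s - c))⁻¹) s := fun s hs =>
    (hasDerivAt_phi hc hs).const_mul (2 * K / Real.sqrt L)
  have hG : ∀ s, c < s → HasDerivAt (gRot K L)
      ((2 / Real.sqrt L) * (2 * Real.sqrt s * Real.sqrt (s - c))⁻¹) s := fun s hs =>
    (hasDerivAt_phi hc hs).const_mul (2 / Real.sqrt L)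
  have hft : deriv (fRot K L) t
      = (2 * K / Real.sqrt L) * (2 * Real.sqrt t * Real.sqrt (t - c))⁻¹ := (hF t ht).deriv
  have hgt : deriv (gRot K L) t
      = (2 / Real.sqrt L) * (2 * Real.sqrt t * Real.sqrt (t - c))⁻¹ := (hG t ht).deriv
  -- inner function derivative at t
  have hinner : HasDerivAt (fun s => 2 * Real.sqrt s * Real.sqrt (s - c))
      (2 * (1 / (2 * Real.sqrt t)) * Real.sqrt (t - c)
        + 2 * Real.sqrt t * (1 / (2 * Real.sqrt (t - c)))) t := by
    have h1 : HasDerivAt (fun s => 2 * Real.sqrt s) (2 * (1 / (2 * Real.sqrt t))) t :=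
      (Real.hasDerivAt_sqrt ht0.ne').const_mul 2
    have h2 : HasDerivAt (fun x => Real.sqrt (x - c)) (1 / (2 * Real.sqrt (t - c))) t := by
      have := (Real.hasDerivAt_sqrt htc.ne').comp t ((hasDerivAt_id t).sub_const c)
      simpa [Function.comp_def] using this
    exact h1.mul h2
  have hne : 2 * Real.sqrt t * Real.sqrt (t - c) ≠ 0 := by positivity
  have hd2f : HasDerivAt (fun s => (2 * K / Real.sqrt L) * (2 * Real.sqrt s * Real.sqrt (s - c))⁻¹)
      ((2 * K / Real.sqrt L) * (-(2 * (1 / (2 * Real.sqrt t)) * Real.sqrt (t - c)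
        + 2 * Real.sqrt t * (1 / (2 * Real.sqrt (t - c))))
        / (2 * Real.sqrt t * Real.sqrt (t - c)) ^ 2)) t :=
    (hinner.inv hne).const_mul _
  have hd2g : HasDerivAt (fun s => (2 / Real.sqrt L) * (2 * Real.sqrt s * Real.sqrt (s - c))⁻¹)
      ((2 / Real.sqrt L) * (-(2 * (1 / (2 * Real.sqrt t)) * Real.sqrt (t - c)
        + 2 * Real.sqrt t * (1 / (2 * Real.sqrt (t - c))))
        / (2 * Real.sqrt t * Real.sqrt (t - c)) ^ 2)) t :=
    (hinner.inv hne).const_mul _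
  have hmem : Set.Ioi c ∈ nhds t := Ioi_mem_nhds ht
  have hEqF : deriv (fRot K L) =ᶠ[nhds t]
      (fun s => (2 * K / Real.sqrt L) * (2 * Real.sqrt s * Real.sqrt (s - c))⁻¹) := by
    filter_upwards [hmem] with s hs
    exact (hF s hs).deriv
  have hEqG : deriv (gRot K L) =ᶠ[nhds t]
      (fun s => (2 / Real.sqrt L) * (2 * Real.sqrt s * Real.sqrt (s - c))⁻¹) := by
    filter_upwards [hmem] with s hs
    exact (hG s hs).deriv
  have hf2 : deriv (deriv (fRot K L)) t
      = (2 * K / Real.sqrt L) * (-(2 * (1 / (2 * Real.sqrt t)) * Real.sqrt (t - c)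
        + 2 * Real.sqrt t * (1 / (2 * Real.sqrt (t - c))))
        / (2 * Real.sqrt t * Real.sqrt (t - c)) ^ 2) := by
    rw [hEqF.deriv_eq]; exact hd2f.deriv
  have hg2 : deriv (deriv (gRot K L)) t
      = (2 / Real.sqrt L) * (-(2 * (1 / (2 * Real.sqrt t)) * Real.sqrt (t - c)
        + 2 * Real.sqrt t * (1 / (2 * Real.sqrt (t - c))))
        / (2 * Real.sqrt t * Real.sqrt (t - c)) ^ 2) := by
    rw [hEqG.deriv_eq]; exact hd2g.deriv
  -- algebra
  have ha2 : Real.sqrt t ^ 2 = t := Real.sq_sqrt ht0.le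
  have hb2 : Real.sqrt (t - c) ^ 2 = t - c := Real.sq_sqrt htc.le
  have hl2 : Real.sqrt L ^ 2 = L := Real.sq_sqrt hL.le
  have hcL : c * L = 4 * (1 + K ^ 2) := by
    rw [hcdef]; field_simp
  set A := Real.sqrt t
  set B := Real.sqrt (t - c)
  set l := Real.sqrt L
  have hceq : c = A ^ 2 - B ^ 2 := by rw [ha2, hb2]; ring
  have hrel : (A ^ 2 - B ^ 2) * l ^ 2 = 4 * (1 + K ^ 2) := by
    rw [← hceq, hl2]; exact hcL
  rw [hft, hgt, hf2, hg2, ← ha2]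
  constructor
  · field_simp
    ring_nf
    linear_combination (-K) * hrel
  · field_simp
    ring_nf
    linear_combination (-1) * hrel
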